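/- If a protocol is (f+1)-accountably safe under a delay-free network, and every safety violation achievable under partial synchrony with f adversary replicas can be simulated in a delay-free network (producing an identically distributed client view) with n-f adversary replicas in n-f different ways—each leaving a different single replica among the first n-f honest—then the protocol satisfies f-finality (safety under partial synchrony with ≤ f adversary replicas, except with negligible probability). -/

import Mathlib

/-- A function `ε : ℕ → ℝ` (of the security parameter) is negligible. -/
def Negligible (ε : ℕ → ℝ) : Prop :=
  ∀ c : ℕ, ∃ N : ℕ, ∀ k ≥ N, ε k ≤ ((k : ℝ)⁻¹) ^ c

lemma Negligible.zero : Negligible (fun _ => (0 : ℝ)) := by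
  intro c
  refine ⟨1, fun k hk => ?_⟩
  have : (0:ℝ) < (k:ℝ) := by exact_mod_cast hk
  positivity

lemma pmf_outer_le_one {α : Type*} (p : PMF α) (s : Set α) : p.toOuterMeasure s ≤ 1 := by
  rw [PMF.toOuterMeasure_apply]
  calc ∑' x, s.indicator p x ≤ ∑' x, p x :=
        ENNReal.tsum_le_tsum fun x => Set.indicator_le_self s p x
    _ = 1 := p.tsum_coe

lemma outer_biUnion_le {α ι : Type*} [DecidableEq ι] (m : MeasureTheory.OuterMeasure α)
    (s : Finset ι) (t : ι → Set α) :
    m (⋃ i ∈ s, t i) ≤ ∑ i ∈ s, m (t i) := by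
  induction s using Finset.induction with
  | empty => simp
  | insert _ _ h ih =>
      rw [Finset.set_biUnion_insert, Finset.sum_insert h]
      exact le_trans (MeasureTheory.measure_union_le _ _) (add_le_add_right ih _)

theorem accountability_implies_finality
    (n f : ℕ) (hf : f < n)
    (View : Type) (Viol : View → Prop) (F : View → Finset (Fin n))
    (ν : ℕ → PMF View)                 -- partially-synchronous execution, ≤ f corrupt
    (μ : Fin n → ℕ → PMF View)         -- delay-free world i, all corrupt except replica i
    (hsim : ∀ i : Fin n, (i : ℕ) < n - f → μ i = ν)
    (hacc : ∀ i : Fin n, (i : ℕ) < n - f → ∃ ε : ℕ → ℝ, Negligible ε ∧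
      ∀ k : ℕ,
        (((μ i k).toOuterMeasure
          {v | Viol v ∧ ¬ (f + 1 ≤ (F v).card ∧ i ∉ F v)}).toReal ≤ ε k)) :
    Negligible (fun k => ((ν k).toOuterMeasure {v | Viol v}).toReal) := by
  classical
  choose ε hneg hbd using hacc
  set S : Finset (Fin n) := Finset.univ.filter (fun i => (i : ℕ) < n - f) with hS
  -- cardinality of S
  have hScard : n - f ≤ S.card := by
    have h1 : (Finset.univ : Finset (Fin (n - f))).card ≤ S.card := by
      apply Finset.card_le_card_of_injOn (fun j => Fin.castLE (Nat.sub_le n f) j)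
      · intro j _
        simp only [hS, Finset.mem_filter, Finset.mem_univ, true_and, Fin.coe_castLE]
        simpa using j.isLt
      · intro a _ b _ h
        exact Fin.castLE_injective _ h
    simpa using h1
  set bad : Fin n → Set View :=
    fun i => {v | Viol v ∧ ¬ (f + 1 ≤ (F v).card ∧ i ∉ F v)} with hbad
  -- inclusion
  have hsub : {v | Viol v} ⊆ ⋃ i ∈ S, bad i := by
    intro v hv
    by_contra hmem
    simp only [Set.mem_iUnion, not_exists] at hmem
    have hgood : ∀ i ∈ S, f + 1 ≤ (F v).card ∧ i ∉ F v := by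
      intro i hi
      by_contra hb
      exact hmem i hi ⟨hv, hb⟩
    have hdisj : Disjoint S (F v) := by
      rw [Finset.disjoint_left]
      intro i hi
      exact (hgood i hi).2
    have hn0 : 0 < n - f := Nat.sub_pos_of_lt hf
    have hi0 : (⟨0, lt_of_le_of_lt (Nat.zero_le f) hf⟩ : Fin n) ∈ S :=
      Finset.mem_filter.2 ⟨Finset.mem_univ _, hn0⟩
    have hcardF : f + 1 ≤ (F v).card := (hgood _ hi0).1
    have hle : S.card + (F v).card ≤ n := by
      have := Finset.card_le_univ (S ∪ F v)
      rw [Finset.card_union_of_disjoint hdisj] at this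
      simpa using this
    omega
  -- measure bound
  set g : Fin n → ℕ → ℝ := fun i k => if h : (i : ℕ) < n - f then ε i h k else 0 with hg
  have hgneg : ∀ i : Fin n, Negligible (g i) := by
    intro i
    by_cases h : (i : ℕ) < n - f
    · simpa [hg, h] using hneg i h
    · simpa [hg, h] using Negligible.zero
  have hkey : ∀ k, ((ν k).toOuterMeasure {v | Viol v}).toReal ≤ ∑ i ∈ S, g i k := by
    intro k
    have h1 : (ν k).toOuterMeasure {v | Viol v} ≤ ∑ i ∈ S, (ν k).toOuterMeasure (bad i) :=
      le_trans ((ν k).toOuterMeasure.mono hsub) (outer_biUnion_le _ _ _)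
    have h2 : ∀ i ∈ S, (ν k).toOuterMeasure (bad i) = (μ i k).toOuterMeasure (bad i) := by
      intro i hi
      have hlt : (i : ℕ) < n - f := by simpa [hS] using hi
      rw [hsim i hlt]
    have hne : ∀ i ∈ S, (μ i k).toOuterMeasure (bad i) ≠ ⊤ :=
      fun i _ => ne_top_of_le_ne_top ENNReal.one_ne_top (pmf_outer_le_one _ _)
    have hsumne : (∑ i ∈ S, (μ i k).toOuterMeasure (bad i)) ≠ ⊤ :=
      ENNReal.sum_ne_top.2 hne
    have h1' : (ν k).toOuterMeasure {v | Viol v} ≤ ∑ i ∈ S, (μ i k).toOuterMeasure (bad i) := by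
      rwa [Finset.sum_congr rfl h2] at h1
    have h3 : ((ν k).toOuterMeasure {v | Viol v}).toReal
        ≤ (∑ i ∈ S, (μ i k).toOuterMeasure (bad i)).toReal :=
      ENNReal.toReal_mono hsumne h1'
    rw [ENNReal.toReal_sum hne] at h3
    refine h3.trans (Finset.sum_le_sum fun i hi => ?_)
    have hlt : (i : ℕ) < n - f := by simpa [hS] using hi
    have hgeq : g i k = ε i hlt k := by simp [hg, hlt]
    rw [hgeq]
    exact hbd i hlt k
  -- sum of negligibles over S is negligible
  have hsumneg : Negligible (fun k => ∑ i ∈ S, g i k) := by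
    intro c
    choose N hN using fun i => hgneg i (c + 1)
    refine ⟨max (max (Finset.univ.sup N) 1) (n + 1), fun k hk => ?_⟩
    have hk1 : 1 ≤ k := le_trans (le_max_of_le_left (le_max_right _ 1)) hk
    have hkn : n + 1 ≤ k := le_trans (le_max_right _ _) hk
    have hkpos : (0:ℝ) < (k : ℝ)⁻¹ := by
      have : (0:ℝ) < (k:ℝ) := by exact_mod_cast hk1
      positivity
    have hterm : ∀ i ∈ S, g i k ≤ ((k : ℝ)⁻¹) ^ (c + 1) := by
      intro i _
      refine hN i k (le_trans (le_trans (Finset.le_sup (Finset.mem_univ i)) ?_) hk)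
      exact le_trans (le_max_left _ 1) (le_max_left _ (n + 1))
    calc ∑ i ∈ S, g i k ≤ ∑ _i ∈ S, ((k : ℝ)⁻¹) ^ (c + 1) := Finset.sum_le_sum hterm
      _ = (S.card : ℝ) * ((k : ℝ)⁻¹) ^ (c + 1) := by
          rw [Finset.sum_const, nsmul_eq_mul]
      _ ≤ ((k:ℝ)⁻¹)^c := by
          rw [pow_succ]
          have hcard : (S.card : ℝ) ≤ (k : ℝ) := by
            have : S.card ≤ n := le_trans (Finset.card_le_univ S) (by simp)
            exact_mod_cast le_trans this (by omega)
          have hkR : (0:ℝ) < (k:ℝ) := by exact_mod_cast hk1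
          calc (S.card : ℝ) * (((k:ℝ)⁻¹)^c * (k:ℝ)⁻¹)
              ≤ (k:ℝ) * (((k:ℝ)⁻¹)^c * (k:ℝ)⁻¹) := by
                apply mul_le_mul_of_nonneg_right hcard
                positivity
            _ = ((k:ℝ)⁻¹)^c * ((k:ℝ) * (k:ℝ)⁻¹) := by ring
            _ = ((k:ℝ)⁻¹)^c := by
                rw [mul_inv_cancel₀ (ne_of_gt hkR), mul_one]
  -- conclude
  intro c
  obtain ⟨N, hN⟩ := hsumneg c
  exact ⟨N, fun k hk => le_trans (hkey k) (hN k hk)⟩
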